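/- (Remark 5.1) If e(0) = 0, then for all t ≥ 0, ‖e(t) + x̃(t)‖_∞ ≤ γ^{-1/2} ε_{V1} (1 + κ^{1/2} ε_{V2}), where ε_{V1} := ‖W̃(0) Λ^{1/2}‖_F / √(λ_min(P)) and ε_{V2} := √(λ_max(P) / (2 ξ λ_min(R))); in particular, for fixed κ the L∞ distance between the plant state and the ideal reference state can be made arbitrarily small by taking the learning rate γ sufficiently large. -/

import Mathlib

open Matrix Filter

noncomputable section

/-- Euclidean norm ‖·‖₂ of a vector. -/
def norm2 {n : ℕ} (v : Fin n → ℝ) : ℝ := Real.sqrt (∑ i, v i ^ 2)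

/-- Supremum (infinity) norm ‖·‖_∞ of a vector (the sup norm on `Fin n → ℝ`). -/
def normInf {n : ℕ} (v : Fin n → ℝ) : ℝ := ‖v‖

/-- Frobenius norm ‖·‖_F of a matrix. -/
def normF {N m : ℕ} (W : Matrix (Fin N) (Fin m) ℝ) : ℝ := Real.sqrt (∑ i, ∑ j, W i j ^ 2)

/-- Smallest eigenvalue λ_min of a real symmetric (Hermitian) matrix. -/
def lamMin {n : ℕ} {A : Matrix (Fin n) (Fin n) ℝ} (hA : A.IsHermitian) : ℝ := ⨅ i, hA.eigenvalues i

/-- Largest eigenvalue λ_max of a real symmetric (Hermitian) matrix. -/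
def lamMax {n : ℕ} {A : Matrix (Fin n) (Fin n) ℝ} (hA : A.IsHermitian) : ℝ := ⨆ i, hA.eigenvalues i

/-- A real square matrix is Hurwitz if every (complex) eigenvalue has negative real part. -/
def Hurwitz {n : ℕ} (A : Matrix (Fin n) (Fin n) ℝ) : Prop :=
  ∀ μ : ℂ, (A.map Complex.ofReal).charpoly.IsRoot μ → μ.re < 0

/-- The Lyapunov function V(e, W̃) = eᵀ P e + γ⁻¹ tr((W̃ Λ^{1/2})ᵀ (W̃ Λ^{1/2})). -/
def Vlyap {n N m : ℕ} (γ : ℝ) (P : Matrix (Fin n) (Fin n) ℝ)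
    (Lhalf : Matrix (Fin m) (Fin m) ℝ) (e : Fin n → ℝ) (W : Matrix (Fin N) (Fin m) ℝ) : ℝ :=
  e ⬝ᵥ (P *ᵥ e) + γ⁻¹ * ((W * Lhalf)ᵀ * (W * Lhalf)).trace

/-- The augmented Lyapunov function V* of Theorem 5.1. -/
def Vstar {n N m : ℕ} (γ κ η ξ : ℝ) (P R : Matrix (Fin n) (Fin n) ℝ)
    (hP : P.IsHermitian) (hR : R.IsHermitian)
    (Lhalf : Matrix (Fin m) (Fin m) ℝ)
    (e : Fin n → ℝ) (W : Matrix (Fin N) (Fin m) ℝ) (eL xt : Fin n → ℝ) : ℝ :=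
  Vlyap γ P Lhalf e W + η⁻¹ * κ * (eL ⬝ᵥ (P *ᵥ eL))
    + 2 * ξ * κ⁻¹ * (lamMax hP)⁻¹ * lamMin hR * (xt ⬝ᵥ (P *ᵥ xt))

/-! ### Auxiliary lemmas -/

lemma vecMul_eq' {n : ℕ} (U : Matrix (Fin n) (Fin n) ℝ) (v : Fin n → ℝ) :
    v ᵥ* U = star U *ᵥ v :=
  vecMul_transpose (star U) v

lemma quad_eq {n : ℕ} {A : Matrix (Fin n) (Fin n) ℝ} (hA : A.IsHermitian) (v : Fin n → ℝ) :
    v ⬝ᵥ (A *ᵥ v) = ∑ i, hA.eigenvalues i *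
      ((star (hA.eigenvectorUnitary : Matrix (Fin n) (Fin n) ℝ) *ᵥ v) i)^2 := by
  set U : Matrix (Fin n) (Fin n) ℝ := (hA.eigenvectorUnitary : Matrix (Fin n) (Fin n) ℝ) with hU
  have h1 : A = U * diagonal hA.eigenvalues * star U := by
    simpa using hA.spectral_theorem
  have h2 := congrArg (fun M => v ⬝ᵥ (M *ᵥ v)) h1
  rw [h2, ← mulVec_mulVec, ← mulVec_mulVec, dotProduct_mulVec (A := U), vecMul_eq']
  simp only [dotProduct, mulVec_diagonal]
  exact Finset.sum_congr rfl fun i _ => by ring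

lemma wnorm {n : ℕ} {A : Matrix (Fin n) (Fin n) ℝ} (hA : A.IsHermitian) (v : Fin n → ℝ) :
    ∑ i, ((star (hA.eigenvectorUnitary : Matrix (Fin n) (Fin n) ℝ) *ᵥ v) i)^2 = v ⬝ᵥ v := by
  set U : Matrix (Fin n) (Fin n) ℝ := (hA.eigenvectorUnitary : Matrix (Fin n) (Fin n) ℝ) with hU
  have : (star U *ᵥ v) ⬝ᵥ (star U *ᵥ v) = v ⬝ᵥ v := by
    nth_rewrite 1 [← vecMul_eq']
    rw [dotProduct_mulVec, vecMul_vecMul,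
      show U * star U = 1 from (Matrix.mem_unitaryGroup_iff).mp hA.eigenvectorUnitary.2,
      vecMul_one]
  rw [← this]; simp [dotProduct, sq]

lemma quad_lower {n : ℕ} [NeZero n] {A : Matrix (Fin n) (Fin n) ℝ} (hA : A.IsHermitian)
    (v : Fin n → ℝ) : (⨅ i, hA.eigenvalues i) * (v ⬝ᵥ v) ≤ v ⬝ᵥ (A *ᵥ v) := by
  rw [quad_eq hA v, ← wnorm hA v, Finset.mul_sum]
  refine Finset.sum_le_sum fun i _ => ?_
  exact mul_le_mul_of_nonneg_right
    (ciInf_le (Set.Finite.bddBelow (Set.finite_range _)) i) (sq_nonneg _)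

lemma quad_upper {n : ℕ} [NeZero n] {A : Matrix (Fin n) (Fin n) ℝ} (hA : A.IsHermitian)
    (v : Fin n → ℝ) : v ⬝ᵥ (A *ᵥ v) ≤ (⨆ i, hA.eigenvalues i) * (v ⬝ᵥ v) := by
  rw [quad_eq hA v, ← wnorm hA v, Finset.mul_sum]
  refine Finset.sum_le_sum fun i _ => ?_
  exact mul_le_mul_of_nonneg_right
    (le_ciSup (Set.Finite.bddAbove (Set.finite_range _)) i) (sq_nonneg _)

lemma iInf_pos' {n : ℕ} [NeZero n] (f : Fin n → ℝ) (hf : ∀ i, 0 < f i) : 0 < ⨅ i, f i := by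
  obtain ⟨i0, hi0⟩ := Finite.exists_min f
  have : (⨅ i, f i) = f i0 :=
    le_antisymm (ciInf_le (Set.Finite.bddBelow (Set.finite_range f)) i0) (le_ciInf hi0)
  rw [this]; exact hf i0

lemma iInf_le_iSup' {n : ℕ} [NeZero n] (f : Fin n → ℝ) : (⨅ i, f i) ≤ ⨆ i, f i :=
  le_trans (ciInf_le (Set.Finite.bddBelow (Set.finite_range f)) (Classical.arbitrary _))
    (le_ciSup (Set.Finite.bddAbove (Set.finite_range f)) _)

lemma swapQF {n : ℕ} {P : Matrix (Fin n) (Fin n) ℝ} (h : P.IsHermitian) (u v : Fin n → ℝ) :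
    u ⬝ᵥ (P *ᵥ v) = v ⬝ᵥ (P *ᵥ u) := by
  rw [dotProduct_mulVec, ← vecMul_transpose, show Pᵀ = P from h, dotProduct_comm]

lemma qf_nonneg {n : ℕ} {P : Matrix (Fin n) (Fin n) ℝ} (h : P.PosDef) (v : Fin n → ℝ) :
    0 ≤ v ⬝ᵥ (P *ᵥ v) := by
  rcases eq_or_ne v 0 with rfl | hv
  · simp
  · have := h.dotProduct_mulVec_pos hv
    simpa using this.le

lemma hasDerivAt_qf {n : ℕ} (P : Matrix (Fin n) (Fin n) ℝ) {u : ℝ → Fin n → ℝ}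
    {u' : Fin n → ℝ} {t : ℝ} (hu : HasDerivAt u u' t) :
    HasDerivAt (fun s => u s ⬝ᵥ (P *ᵥ u s))
      (u' ⬝ᵥ (P *ᵥ u t) + u t ⬝ᵥ (P *ᵥ u')) t := by
  have hc : ∀ i, HasDerivAt (fun s => u s i) (u' i) t := fun i => hasDerivAt_pi.mp hu i
  have key : ∀ i : Fin n, HasDerivAt (fun s => u s i * (∑ j, P i j * u s j))
      (u' i * (∑ j, P i j * u t j) + u t i * (∑ j, P i j * u' j)) t := by
    intro i
    exact (hc i).mul (HasDerivAt.fun_sum fun j _ => (hc j).const_mul (P i j))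
  have h2 := HasDerivAt.fun_sum (fun i (_ : i ∈ Finset.univ) => key i)
  have hfe : (fun s => u s ⬝ᵥ (P *ᵥ u s)) = fun s => ∑ i, u s i * (∑ j, P i j * u s j) := by
    funext s; simp [dotProduct, mulVec]
  rw [hfe]
  refine h2.congr_deriv ?_
  symm
  simp [dotProduct, mulVec, Finset.sum_add_distrib]

lemma vecMul_diag {m : ℕ} {L : Matrix (Fin m) (Fin m) ℝ} (hL : L.IsDiag)
    (u : Fin m → ℝ) (j : Fin m) : (u ᵥ* L) j = u j * L j j := by
  rw [Matrix.vecMul, dotProduct, Finset.sum_eq_single j]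
  · intro k _ hk; rw [show L k j = 0 from hL hk, mul_zero]
  · simp

lemma traceNormF {N m : ℕ} (M : Matrix (Fin N) (Fin m) ℝ) :
    (Mᵀ * M).trace = ∑ i, ∑ j, (M i j)^2 := by
  rw [Matrix.trace]
  simp only [Matrix.diag_apply, Matrix.mul_apply, Matrix.transpose_apply]
  rw [Finset.sum_comm]
  exact Finset.sum_congr rfl fun i _ => Finset.sum_congr rfl fun j _ => (sq _).symm

lemma mul_diag_apply {N m : ℕ} {L : Matrix (Fin m) (Fin m) ℝ} (hL : L.IsDiag)
    (W : Matrix (Fin N) (Fin m) ℝ) (i : Fin N) (j : Fin m) :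
    (W * L) i j = W i j * L j j := by
  rw [Matrix.mul_apply, Finset.sum_eq_single j]
  · intro k _ hk; rw [hL hk, mul_zero]
  · simp

lemma diag_sq {m : ℕ} {L Lam : Matrix (Fin m) (Fin m) ℝ} (hL : L.IsDiag)
    (hsq : L * L = Lam) (j : Fin m) : (L j j)^2 = Lam j j := by
  rw [← hsq, mul_diag_apply hL, sq]

lemma traceForm {N m : ℕ} {L : Matrix (Fin m) (Fin m) ℝ} (hL : L.IsDiag)
    (W : Matrix (Fin N) (Fin m) ℝ) :
    ((W * L)ᵀ * (W * L)).trace = ∑ i, ∑ j, (W i j)^2 * (L j j)^2 := by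
  rw [traceNormF]
  exact Finset.sum_congr rfl fun i _ => Finset.sum_congr rfl fun j _ => by
    rw [mul_diag_apply hL]; ring

lemma hasDerivAt_traceTerm {N m : ℕ} (γ : ℝ) {Wt : ℝ → Matrix (Fin N) (Fin m) ℝ}
    {W' : Matrix (Fin N) (Fin m) ℝ} {t : ℝ} {L : Matrix (Fin m) (Fin m) ℝ} (hL : L.IsDiag)
    (hW : ∀ i j, HasDerivAt (fun s => Wt s i j) (W' i j) t) :
    HasDerivAt (fun s => γ⁻¹ * ((Wt s * L)ᵀ * (Wt s * L)).trace)
      (γ⁻¹ * ∑ i, ∑ j, 2 * Wt t i j * W' i j * (L j j)^2) t := by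
  have hfe : (fun s => γ⁻¹ * ((Wt s * L)ᵀ * (Wt s * L)).trace)
      = fun s => γ⁻¹ * ∑ i, ∑ j, (Wt s i j)^2 * (L j j)^2 := by
    funext s; rw [traceForm hL]
  rw [hfe]
  have key : ∀ (i : Fin N), HasDerivAt (fun s => ∑ j, (Wt s i j)^2 * (L j j)^2)
      (∑ j, 2 * Wt t i j * W' i j * (L j j)^2) t := by
    intro i
    refine HasDerivAt.fun_sum fun j _ => ?_
    have := ((hW i j).pow 2).mul_const ((L j j)^2)
    refine this.congr_deriv ?_
    norm_num
  exact (HasDerivAt.fun_sum (fun i (_ : i ∈ Finset.univ) => key i)).const_mul γ⁻¹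

lemma cancelLemma {n N m : ℕ} (P : Matrix (Fin n) (Fin n) ℝ) (B : Matrix (Fin n) (Fin m) ℝ)
    {Lam : Matrix (Fin m) (Fin m) ℝ} (hLam : Lam.IsDiag)
    (W : Matrix (Fin N) (Fin m) ℝ) (e : Fin n → ℝ) (σ : Fin N → ℝ) :
    e ⬝ᵥ (P *ᵥ ((B * Lam * Wᵀ) *ᵥ σ))
      = ∑ i, ∑ j, W i j * (σ i * ((e ᵥ* (P * B)) j)) * Lam j j := by
  rw [mulVec_mulVec, dotProduct_mulVec, ← Matrix.mul_assoc, ← Matrix.mul_assoc,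
    ← vecMul_vecMul, ← vecMul_vecMul]
  rw [dotProduct]
  refine Finset.sum_congr rfl fun i _ => ?_
  set u := e ᵥ* (P * B) with hu
  have h1 : ∀ x : Fin m → ℝ, (x ᵥ* Wᵀ) i = ∑ j, x j * W i j := by
    intro x
    simp only [Matrix.vecMul, dotProduct, Matrix.transpose_apply]
  rw [h1, Finset.sum_mul]
  refine Finset.sum_congr rfl fun j _ => ?_
  rw [vecMul_diag hLam]
  ring

lemma sqrt_tendsto_atTop : Tendsto Real.sqrt atTop atTop := by
  refine tendsto_atTop_atTop.mpr fun b => ⟨(max b 0)^2, fun a ha => ?_⟩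
  rcases le_total b 0 with h | h
  · exact h.trans (Real.sqrt_nonneg a)
  · calc b = Real.sqrt (b^2) := (Real.sqrt_sq h).symm
      _ ≤ Real.sqrt a := Real.sqrt_le_sqrt (le_trans (by nlinarith [le_max_left b 0]) ha)

lemma norm2_eq_dot {n : ℕ} (v : Fin n → ℝ) : norm2 v = Real.sqrt (v ⬝ᵥ v) := by
  unfold norm2; congr 1; simp [dotProduct, sq]

lemma normInf_le_norm2 {n : ℕ} (v : Fin n → ℝ) : normInf v ≤ norm2 v := by
  unfold normInf norm2
  rw [pi_norm_le_iff_of_nonneg (Real.sqrt_nonneg _)]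
  intro i
  rw [Real.norm_eq_abs, ← Real.sqrt_sq_eq_abs]
  exact Real.sqrt_le_sqrt (Finset.single_le_sum (fun j _ => sq_nonneg (v j)) (Finset.mem_univ i))

lemma norm2_add_le {n : ℕ} (u v : Fin n → ℝ) : norm2 (u + v) ≤ norm2 u + norm2 v := by
  have h : ∀ w : Fin n → ℝ, norm2 w = ‖(WithLp.equiv 2 (Fin n → ℝ)).symm w‖ := by
    intro w
    rw [EuclideanSpace.norm_eq]
    unfold norm2
    congr 1
    exact Finset.sum_congr rfl fun i _ => by
      rw [Real.norm_eq_abs, sq_abs]; rfl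
  rw [h, h, h]
  exact norm_add_le _ _

set_option maxHeartbeats 2000000 in
theorem statement9
    {n N m : ℕ} (hn : 0 < n) (hN : 0 < N) (hm : 0 < m)
    (Ar : Matrix (Fin n) (Fin n) ℝ) (B : Matrix (Fin n) (Fin m) ℝ)
    (Lam Lhalf : Matrix (Fin m) (Fin m) ℝ) (R P : Matrix (Fin n) (Fin n) ℝ)
    (hAr : Hurwitz Ar)
    (hLam : Lam.PosDef) (hLamDiag : Lam.IsDiag)
    (hLhalfDiag : Lhalf.IsDiag) (hLhalfSq : Lhalf * Lhalf = Lam)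
    (hR : R.PosDef) (hP : P.PosDef)
    (hLyap : Arᵀ * P + P * Ar + R = 0)
    (γ κ η ξ : ℝ) (hγ : 0 < γ) (hκ : 0 < κ) (hη : 0 < η) (hξ0 : 0 < ξ) (hξ1 : ξ < 1)
    (σx : ℝ → Fin N → ℝ)
    (e eL xt : ℝ → Fin n → ℝ) (Wt : ℝ → Matrix (Fin N) (Fin m) ℝ)
    (heL0 : eL 0 = 0) (hxt0 : xt 0 = 0)
    (he : ∀ t ≥ (0:ℝ), HasDerivAt e
          (Ar *ᵥ e t - (B * Lam * (Wt t)ᵀ) *ᵥ σx t - κ • (e t - eL t)) t)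
    (hW : ∀ t ≥ (0:ℝ), ∀ i j, HasDerivAt (fun s => Wt s i j)
          (γ * (σx t i * ((e t) ᵥ* (P * B)) j)) t)
    (heL : ∀ t ≥ (0:ℝ), HasDerivAt eL (Ar *ᵥ eL t + η • (e t - eL t)) t)
    (hxt : ∀ t ≥ (0:ℝ), HasDerivAt xt (Ar *ᵥ xt t + κ • (e t - eL t)) t)
    (he0 : e 0 = 0)
    : (∀ t ≥ (0:ℝ),
        normInf (e t + xt t)
          ≤ (Real.sqrt γ)⁻¹ * (normF (Wt 0 * Lhalf) / Real.sqrt (lamMin hP.1))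
            * (1 + Real.sqrt κ * Real.sqrt (lamMax hP.1 / (2 * ξ * lamMin hR.1))))
      ∧ Tendsto (fun g : ℝ => (Real.sqrt g)⁻¹ * (normF (Wt 0 * Lhalf) / Real.sqrt (lamMin hP.1))
            * (1 + Real.sqrt κ * Real.sqrt (lamMax hP.1 / (2 * ξ * lamMin hR.1))))
          atTop (nhds 0) := by
  haveI : NeZero n := ⟨hn.ne'⟩
  constructor
  · -- main bound
    have hlp : 0 < lamMin hP.1 := iInf_pos' _ (hP.eigenvalues_pos)
    have hlR : 0 < lamMin hR.1 := iInf_pos' _ (hR.eigenvalues_pos)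
    have hlP : 0 < lamMax hP.1 := lt_of_lt_of_le hlp (iInf_le_iSup' _)
    set c : ℝ := 2 * ξ * κ⁻¹ * (lamMax hP.1)⁻¹ * lamMin hR.1 with hc
    have hcpos : 0 < c := by rw [hc]; positivity
    set F : ℝ → ℝ := fun s =>
      Vstar γ κ η ξ P R hP.1 hR.1 Lhalf (e s) (Wt s) (eL s) (xt s) with hF
    have hVs : ∀ s, F s = e s ⬝ᵥ (P *ᵥ e s)
        + γ⁻¹ * ((Wt s * Lhalf)ᵀ * (Wt s * Lhalf)).trace
        + η⁻¹ * κ * (eL s ⬝ᵥ (P *ᵥ eL s)) + c * (xt s ⬝ᵥ (P *ᵥ xt s)) := by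
      intro s; simp only [hF, Vstar, Vlyap]; rw [hc]
    set D : ℝ → ℝ := fun s =>
      -(e s ⬝ᵥ (R *ᵥ e s)) - η⁻¹ * κ * (eL s ⬝ᵥ (R *ᵥ eL s))
        - 2 * κ * ((e s - eL s) ⬝ᵥ (P *ᵥ (e s - eL s)))
        - c * (xt s ⬝ᵥ (R *ᵥ xt s))
        + 2 * c * κ * (xt s ⬝ᵥ (P *ᵥ (e s - eL s))) with hD
    -- Lyapunov equation in quadratic form
    have hPR : Arᵀ * P + P * Ar = -R := eq_neg_of_add_eq_zero_left hLyap
    have lyap : ∀ v : Fin n → ℝ, 2 * (v ⬝ᵥ (P *ᵥ (Ar *ᵥ v))) = -(v ⬝ᵥ (R *ᵥ v)) := by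
      intro v
      have h1 := congrArg (fun M => v ⬝ᵥ (M *ᵥ v)) hPR
      rw [add_mulVec, dotProduct_add, ← mulVec_mulVec, ← mulVec_mulVec] at h1
      have h2 : v ⬝ᵥ (Arᵀ *ᵥ (P *ᵥ v)) = v ⬝ᵥ (P *ᵥ (Ar *ᵥ v)) := by
        rw [dotProduct_mulVec, vecMul_transpose]
        exact swapQF hP.1 _ _
      rw [h2, neg_mulVec, dotProduct_neg] at h1
      linarith
    -- derivative of F
    have hFD : ∀ t ≥ (0:ℝ), HasDerivAt F (D t) t := by
      intro t ht
      have A1 := hasDerivAt_qf P (he t ht)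
      have A2 := hasDerivAt_traceTerm γ hLhalfDiag
        (W' := fun i j => γ * (σx t i * ((e t) ᵥ* (P * B)) j)) (fun i j => hW t ht i j)
      have A3 := (hasDerivAt_qf P (heL t ht)).const_mul (η⁻¹ * κ)
      have A4 := (hasDerivAt_qf P (hxt t ht)).const_mul
        (2 * ξ * κ⁻¹ * (lamMax hP.1)⁻¹ * lamMin hR.1)
      have Asum := ((A1.add A2).add A3).add A4
      have hfun : F = fun s =>
          (e s ⬝ᵥ (P *ᵥ e s) + γ⁻¹ * ((Wt s * Lhalf)ᵀ * (Wt s * Lhalf)).trace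
            + η⁻¹ * κ * (eL s ⬝ᵥ (P *ᵥ eL s)))
            + 2 * ξ * κ⁻¹ * (lamMax hP.1)⁻¹ * lamMin hR.1 * (xt s ⬝ᵥ (P *ᵥ xt s)) := by
        funext s; simp only [hF, Vstar, Vlyap]
      rw [hfun]
      refine HasDerivAt.congr_deriv Asum ?_
      symm
      set e' := Ar *ᵥ e t - (B * Lam * (Wt t)ᵀ) *ᵥ σx t - κ • (e t - eL t) with he'
      set eL' := Ar *ᵥ eL t + η • (e t - eL t) with heL'
      set xt' := Ar *ᵥ xt t + κ • (e t - eL t) with hxt'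
      have tr_eq : γ⁻¹ * (∑ i, ∑ j, 2 * Wt t i j * (γ * (σx t i * ((e t) ᵥ* (P * B)) j))
          * (Lhalf j j)^2)
          = 2 * (e t ⬝ᵥ (P *ᵥ ((B * Lam * (Wt t)ᵀ) *ᵥ σx t))) := by
        rw [cancelLemma P B hLamDiag, Finset.mul_sum, Finset.mul_sum]
        refine Finset.sum_congr rfl fun i _ => ?_
        rw [Finset.mul_sum, Finset.mul_sum]
        refine Finset.sum_congr rfl fun j _ => ?_
        rw [diag_sq hLhalfDiag hLhalfSq j]
        field_simp
      have s1 : e' ⬝ᵥ (P *ᵥ e t) = e t ⬝ᵥ (P *ᵥ e') := swapQF hP.1 _ _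
      have s2 : eL' ⬝ᵥ (P *ᵥ eL t) = eL t ⬝ᵥ (P *ᵥ eL') := swapQF hP.1 _ _
      have s3 : xt' ⬝ᵥ (P *ᵥ xt t) = xt t ⬝ᵥ (P *ᵥ xt') := swapQF hP.1 _ _
      rw [s1, s2, s3, he', heL', hxt']
      simp only [Matrix.mulVec_sub, Matrix.mulVec_add, Matrix.mulVec_smul,
        dotProduct_sub, dotProduct_add, dotProduct_smul, smul_eq_mul,
        sub_dotProduct, hD]
      rw [← hc]
      have hetainv : η⁻¹ * η = 1 := inv_mul_cancel₀ hη.ne'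
      linear_combination (-1 : ℝ) * lyap (e t) - η⁻¹ * κ * lyap (eL t) - c * lyap (xt t)
        - tr_eq - 2 * κ * (eL t ⬝ᵥ (P *ᵥ e t) - eL t ⬝ᵥ (P *ᵥ eL t)) * hetainv
    -- D is nonpositive
    have hD0 : ∀ t ≥ (0:ℝ), D t ≤ 0 := by
      intro t ht
      rw [hD]
      simp only
      set d := e t - eL t with hd
      set θ : ℝ := ξ * lamMin hR.1 / (κ * lamMax hP.1) with hθ
      have hθpos : 0 < θ := by rw [hθ]; positivity
      have young : 2 * θ * (xt t ⬝ᵥ (P *ᵥ d))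
          ≤ θ^2 * (xt t ⬝ᵥ (P *ᵥ xt t)) + d ⬝ᵥ (P *ᵥ d) := by
        have h0 : 0 ≤ (θ • xt t - d) ⬝ᵥ (P *ᵥ (θ • xt t - d)) := qf_nonneg hP _
        simp only [Matrix.mulVec_sub, Matrix.mulVec_smul, dotProduct_sub,
          sub_dotProduct, smul_dotProduct, dotProduct_smul, smul_eq_mul] at h0
        have hswap : d ⬝ᵥ (P *ᵥ xt t) = xt t ⬝ᵥ (P *ᵥ d) := swapQF hP.1 _ _
        rw [hswap] at h0
        nlinarith [h0]
      have h1 : 2 * (xt t ⬝ᵥ (P *ᵥ d))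
          ≤ θ * (xt t ⬝ᵥ (P *ᵥ xt t)) + θ⁻¹ * (d ⬝ᵥ (P *ᵥ d)) := by
        have h6 := mul_le_mul_of_nonneg_left young (le_of_lt (inv_pos.mpr hθpos))
        have e1 : θ⁻¹ * (2 * θ * (xt t ⬝ᵥ (P *ᵥ d))) = 2 * (xt t ⬝ᵥ (P *ᵥ d)) := by
          field_simp
        have e2 : θ⁻¹ * (θ^2 * (xt t ⬝ᵥ (P *ᵥ xt t)) + d ⬝ᵥ (P *ᵥ d))
            = θ * (xt t ⬝ᵥ (P *ᵥ xt t)) + θ⁻¹ * (d ⬝ᵥ (P *ᵥ d)) := by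
          field_simp
        rw [e1, e2] at h6
        exact h6
      have hcκ : (0:ℝ) ≤ c * κ := le_of_lt (mul_pos hcpos hκ)
      have h3 := mul_le_mul_of_nonneg_left h1 hcκ
      have hinv : c * κ * θ⁻¹ = 2 * κ := by
        rw [hc, hθ]
        field_simp
      have h5 : c * κ * (θ * (xt t ⬝ᵥ (P *ᵥ xt t)) + θ⁻¹ * (d ⬝ᵥ (P *ᵥ d)))
          = c * κ * θ * (xt t ⬝ᵥ (P *ᵥ xt t)) + 2 * κ * (d ⬝ᵥ (P *ᵥ d)) := by
        linear_combination (d ⬝ᵥ (P *ᵥ d)) * hinv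
      rw [h5] at h3
      have hXub : xt t ⬝ᵥ (P *ᵥ xt t) ≤ lamMax hP.1 * (xt t ⬝ᵥ xt t) := quad_upper hP.1 _
      have hRlb : lamMin hR.1 * (xt t ⬝ᵥ xt t) ≤ xt t ⬝ᵥ (R *ᵥ xt t) := quad_lower hR.1 _
      have hθc : c * κ * θ * lamMax hP.1 = c * ξ * lamMin hR.1 := by
        rw [hθ]; field_simp
      have hxx : (0:ℝ) ≤ xt t ⬝ᵥ xt t := by
        simpa [dotProduct] using Finset.sum_nonneg fun i (_ : i ∈ Finset.univ) =>
          mul_self_nonneg (xt t i)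
      have habs : c * κ * θ * (xt t ⬝ᵥ (P *ᵥ xt t)) ≤ c * (xt t ⬝ᵥ (R *ᵥ xt t)) := by
        have hcκθ : (0:ℝ) ≤ c * κ * θ := by positivity
        have ha1 : c * κ * θ * (xt t ⬝ᵥ (P *ᵥ xt t))
            ≤ c * κ * θ * (lamMax hP.1 * (xt t ⬝ᵥ xt t)) :=
          mul_le_mul_of_nonneg_left hXub hcκθ
        have ha2 : c * κ * θ * (lamMax hP.1 * (xt t ⬝ᵥ xt t))
            = c * ξ * (lamMin hR.1 * (xt t ⬝ᵥ xt t)) := by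
          linear_combination (xt t ⬝ᵥ xt t) * hθc
        have ha3 : c * ξ * (lamMin hR.1 * (xt t ⬝ᵥ xt t))
            ≤ c * 1 * (lamMin hR.1 * (xt t ⬝ᵥ xt t)) := by
          have hq : (0:ℝ) ≤ lamMin hR.1 * (xt t ⬝ᵥ xt t) := by positivity
          have := mul_le_mul_of_nonneg_right (mul_le_mul_of_nonneg_left hξ1.le hcpos.le) hq
          simpa using this
        have ha4 : c * 1 * (lamMin hR.1 * (xt t ⬝ᵥ xt t)) ≤ c * (xt t ⬝ᵥ (R *ᵥ xt t)) := by
          rw [mul_one]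
          exact mul_le_mul_of_nonneg_left hRlb hcpos.le
        linarith
      have hqe : 0 ≤ e t ⬝ᵥ (R *ᵥ e t) := qf_nonneg hR _
      have hqeL : 0 ≤ eL t ⬝ᵥ (R *ᵥ eL t) := qf_nonneg hR _
      have hηκ : (0:ℝ) ≤ η⁻¹ * κ := by positivity
      nlinarith [h3, habs, hqe, mul_nonneg hηκ hqeL]
    -- monotonicity
    have hant : AntitoneOn F (Set.Ici (0:ℝ)) := by
      apply antitoneOn_of_deriv_nonpos (convex_Ici 0)
      · exact fun t ht => ((hFD t ht).continuousAt).continuousWithinAt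
      · intro t ht
        rw [interior_Ici] at ht
        exact ((hFD t (le_of_lt ht)).differentiableAt).differentiableWithinAt
      · intro t ht
        rw [interior_Ici] at ht
        rw [(hFD t ht.le).deriv]
        exact hD0 t ht.le
    have hmono : ∀ t ≥ (0:ℝ), F t ≤ F 0 :=
      fun t ht => hant (Set.self_mem_Ici) ht ht
    -- value at 0
    set a : ℝ := normF (Wt 0 * Lhalf) with ha
    have ha0 : 0 ≤ a := Real.sqrt_nonneg _
    have haa : a^2 = ∑ i, ∑ j, ((Wt 0 * Lhalf) i j)^2 := by
      rw [ha]; unfold normF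
      exact Real.sq_sqrt (Finset.sum_nonneg fun i _ => Finset.sum_nonneg fun j _ => sq_nonneg _)
    have hF0 : F 0 = γ⁻¹ * a^2 := by
      rw [hVs 0, he0, heL0, hxt0]
      simp only [Matrix.mulVec_zero, dotProduct_zero, mul_zero, add_zero, zero_add]
      rw [traceNormF, haa]
    have htr_nn : ∀ s : ℝ, 0 ≤ γ⁻¹ * ((Wt s * Lhalf)ᵀ * (Wt s * Lhalf)).trace := by
      intro s
      rw [traceNormF]
      have : (0:ℝ) ≤ ∑ i, ∑ j, ((Wt s * Lhalf) i j)^2 :=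
        Finset.sum_nonneg fun i _ => Finset.sum_nonneg fun j _ => sq_nonneg _
      positivity
    intro t ht
    have hFt : F t ≤ γ⁻¹ * a^2 := by rw [← hF0]; exact hmono t ht
    have hFe : lamMin hP.1 * (e t ⬝ᵥ e t) ≤ γ⁻¹ * a^2 := by
      have h1 : lamMin hP.1 * (e t ⬝ᵥ e t) ≤ e t ⬝ᵥ (P *ᵥ e t) := quad_lower hP.1 _
      have h2 : e t ⬝ᵥ (P *ᵥ e t) ≤ F t := by
        rw [hVs t]
        have n1 := htr_nn t
        have n2 : 0 ≤ η⁻¹ * κ * (eL t ⬝ᵥ (P *ᵥ eL t)) := by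
          have := qf_nonneg hP (eL t); positivity
        have n3 : 0 ≤ c * (xt t ⬝ᵥ (P *ᵥ xt t)) := by
          have := qf_nonneg hP (xt t); positivity
        linarith
      linarith
    have hFxt : c * (lamMin hP.1 * (xt t ⬝ᵥ xt t)) ≤ γ⁻¹ * a^2 := by
      have h1 : lamMin hP.1 * (xt t ⬝ᵥ xt t) ≤ xt t ⬝ᵥ (P *ᵥ xt t) := quad_lower hP.1 _
      have h2 : c * (xt t ⬝ᵥ (P *ᵥ xt t)) ≤ F t := by
        rw [hVs t]
        have n1 := htr_nn t
        have n2 : 0 ≤ η⁻¹ * κ * (eL t ⬝ᵥ (P *ᵥ eL t)) := by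
          have := qf_nonneg hP (eL t); positivity
        have n4 : 0 ≤ e t ⬝ᵥ (P *ᵥ e t) := qf_nonneg hP _
        linarith
      have h3 : c * (lamMin hP.1 * (xt t ⬝ᵥ xt t)) ≤ c * (xt t ⬝ᵥ (P *ᵥ xt t)) :=
        mul_le_mul_of_nonneg_left h1 hcpos.le
      linarith
    set Ce : ℝ := (Real.sqrt γ)⁻¹ * (a / Real.sqrt (lamMin hP.1)) with hCe
    have hCesq : Real.sqrt (γ⁻¹ * a^2 / lamMin hP.1) = Ce := by
      rw [hCe, show γ⁻¹ * a^2 / lamMin hP.1 = (a^2) * (γ⁻¹ * (lamMin hP.1)⁻¹) by ring,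
        Real.sqrt_mul (sq_nonneg a), Real.sqrt_sq ha0,
        Real.sqrt_mul (by positivity), Real.sqrt_inv, Real.sqrt_inv]
      ring
    have hbe : norm2 (e t) ≤ Ce := by
      rw [norm2_eq_dot]
      have h1 : e t ⬝ᵥ e t ≤ γ⁻¹ * a^2 / lamMin hP.1 := by
        rw [le_div_iff₀ hlp]
        nlinarith [hFe]
      calc Real.sqrt (e t ⬝ᵥ e t) ≤ Real.sqrt (γ⁻¹ * a^2 / lamMin hP.1) := Real.sqrt_le_sqrt h1
        _ = Ce := hCesq
    have hbxt : norm2 (xt t)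
        ≤ Ce * (Real.sqrt κ * Real.sqrt (lamMax hP.1 / (2 * ξ * lamMin hR.1))) := by
      rw [norm2_eq_dot]
      have h1 : xt t ⬝ᵥ xt t ≤ γ⁻¹ * a^2 / (c * lamMin hP.1) := by
        rw [le_div_iff₀ (by positivity)]
        nlinarith [hFxt]
      have h2 : γ⁻¹ * a^2 / (c * lamMin hP.1)
          = (γ⁻¹ * a^2 / lamMin hP.1) * (κ * (lamMax hP.1 / (2 * ξ * lamMin hR.1))) := by
        rw [hc]
        field_simp
        try exact Or.inl trivial
      calc Real.sqrt (xt t ⬝ᵥ xt t) ≤ Real.sqrt (γ⁻¹ * a^2 / (c * lamMin hP.1)) :=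
            Real.sqrt_le_sqrt h1
        _ = Ce * (Real.sqrt κ * Real.sqrt (lamMax hP.1 / (2 * ξ * lamMin hR.1))) := by
            rw [h2, Real.sqrt_mul (by positivity), Real.sqrt_mul hκ.le, hCesq]
    calc normInf (e t + xt t) ≤ norm2 (e t + xt t) := normInf_le_norm2 _
      _ ≤ norm2 (e t) + norm2 (xt t) := norm2_add_le _ _
      _ ≤ Ce + Ce * (Real.sqrt κ * Real.sqrt (lamMax hP.1 / (2 * ξ * lamMin hR.1))) :=
          add_le_add hbe hbxt
      _ = (Real.sqrt γ)⁻¹ * (a / Real.sqrt (lamMin hP.1))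
          * (1 + Real.sqrt κ * Real.sqrt (lamMax hP.1 / (2 * ξ * lamMin hR.1))) := by
          rw [hCe]; ring
  · -- tendsto part
    have h1 : Tendsto (fun g : ℝ => (Real.sqrt g)⁻¹) atTop (nhds 0) :=
      sqrt_tendsto_atTop.inv_tendsto_atTop
    have h2 := (h1.mul_const (normF (Wt 0 * Lhalf) / Real.sqrt (lamMin hP.1))).mul_const
      (1 + Real.sqrt κ * Real.sqrt (lamMax hP.1 / (2 * ξ * lamMin hR.1)))
    simpa using h2
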